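/- Let n ≥ 3 and let 𝔲 : Δ_n → S_n be a binary map, i.e., there is a measurable set F ⊂ I² such that for almost every a = (a_1,...,a_n) ∈ Δ_n and all i ≠ j, 𝔲(a)_i < 𝔲(a)_j if and only if (a_i, a_j) ∈ F. Then the relation u ≺ v :⟺ (u,v) ∈ F is an almost total ordering of I: the set of pairs (u,v) ∈ I² for which neither u ≺ v nor v ≺ u holds is Lebesgue-null, the set of pairs for which both hold is Lebesgue-null, and for almost every triple (u,v,w) ∈ I³ with u ≺ v and v ≺ w one also has u ≺ w. -/

import Mathlib

set_option maxHeartbeats 1000000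


open MeasureTheory

/-- `Δ_n`, the simplex of descending `n`-tuples in `[0,1]^n`. -/
def simplexSet (n : ℕ) : Set (Fin n → ℝ) :=
  {a | (∀ i, a i ∈ Set.Icc (0:ℝ) 1) ∧ ∀ i j : Fin n, i ≤ j → a j ≤ a i}

noncomputable def θe : (Fin 3 → ℝ) ≃ᵐ ℝ × ℝ × ℝ :=
  (MeasurableEquiv.piFinSuccAbove (fun _ : Fin 3 => ℝ) 0).trans
    ((MeasurableEquiv.refl ℝ).prodCongr MeasurableEquiv.finTwoArrow)

lemma θe_mp : MeasurePreserving θe (volume) (volume) :=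
  ((MeasurePreserving.id volume).prod (volume_preserving_finTwoArrow ℝ)).comp
    (volume_preserving_piFinSuccAbove (fun _ : Fin 3 => ℝ) 0)

def pP (n : ℕ) : Fin n → Prop := fun i => (i : ℕ) < 3

instance (n : ℕ) : DecidablePred (pP n) := fun _ => Nat.decLt _ _

def e3d (n : ℕ) (hn : 3 ≤ n) : Fin 3 ≃ {i : Fin n // pP n i} :=
  { toFun := fun j => ⟨⟨(j : ℕ), by omega⟩, j.2⟩
    invFun := fun s => ⟨(s.1 : ℕ), s.2⟩
    left_inv := fun j => rfl
    right_inv := fun s => rfl }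

noncomputable def χd (n : ℕ) (hn : 3 ≤ n) : ({i : Fin n // pP n i} → ℝ) → ℝ × ℝ × ℝ :=
  fun x => (x (e3d n hn 0), x (e3d n hn 1), x (e3d n hn 2))

lemma χd_eq (n : ℕ) (hn : 3 ≤ n) : χd n hn =
    θe ∘ ⇑(MeasurableEquiv.piCongrLeft (fun _ : {i : Fin n // pP n i} => ℝ) (e3d n hn)).symm :=
  rfl

lemma χd_mp (n : ℕ) (hn : 3 ≤ n) : MeasurePreserving (χd n hn) volume volume := by
  rw [χd_eq n hn]
  exact θe_mp.comp (MeasurePreserving.symm (μa := (volume : Measure (Fin 3 → ℝ))) _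
    (volume_measurePreserving_piCongrLeft _ (e3d n hn)))

def Dset : Set (ℝ × ℝ × ℝ) := {q : ℝ × ℝ × ℝ | q.1 ≤ 1 ∧ q.2.1 ≤ q.1 ∧ q.2.2 ≤ q.2.1 ∧ 0 < q.2.2}

lemma Dset_meas : MeasurableSet Dset := by
  have hDeq : Dset = {q : ℝ × ℝ × ℝ | q.1 ≤ 1} ∩ ({q | q.2.1 ≤ q.1} ∩
      ({q | q.2.2 ≤ q.2.1} ∩ {q | 0 < q.2.2})) := rfl
  rw [hDeq]
  exact (measurableSet_le measurable_fst measurable_const).inter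
    ((measurableSet_le (measurable_fst.comp measurable_snd) measurable_fst).inter
      ((measurableSet_le (measurable_snd.comp measurable_snd)
          (measurable_fst.comp measurable_snd)).inter
        (measurableSet_lt measurable_const (measurable_snd.comp measurable_snd))))

lemma simplex_measurable (n : ℕ) : MeasurableSet (simplexSet n) := by
  have h1 : MeasurableSet {a : Fin n → ℝ | ∀ i, a i ∈ Set.Icc (0:ℝ) 1} := by
    rw [Set.setOf_forall]
    exact MeasurableSet.iInter fun i => (measurable_pi_apply i) measurableSet_Icc
  have h2 : MeasurableSet {a : Fin n → ℝ | ∀ i j : Fin n, i ≤ j → a j ≤ a i} := by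
    rw [Set.setOf_forall]
    refine MeasurableSet.iInter fun i => ?_
    rw [Set.setOf_forall]
    refine MeasurableSet.iInter fun j => ?_
    by_cases hij : i ≤ j
    · simp only [hij, true_implies]
      exact measurableSet_le (measurable_pi_apply j) (measurable_pi_apply i)
    · simp [hij]
  exact h1.inter h2

lemma slice_ne_zero {n : ℕ} (hn : 3 ≤ n) (E : Set (ℝ × ℝ × ℝ))
    (x : {i : Fin n // pP n i} → ℝ) (hx : χd n hn x ∈ E ∩ Dset) :
    (volume : Measure ({i : Fin n // ¬ pP n i} → ℝ))
      {b : {i : Fin n // ¬ pP n i} → ℝ |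
        (MeasurableEquiv.piEquivPiSubtypeProd (fun _ : Fin n => ℝ) (pP n)).symm (x, b)
          ∈ simplexSet n ∧
        ((MeasurableEquiv.piEquivPiSubtypeProd (fun _ : Fin n => ℝ) (pP n)).symm (x, b) ⟨0, by omega⟩,
         (MeasurableEquiv.piEquivPiSubtypeProd (fun _ : Fin n => ℝ) (pP n)).symm (x, b) ⟨1, by omega⟩,
         (MeasurableEquiv.piEquivPiSubtypeProd (fun _ : Fin n => ℝ) (pP n)).symm (x, b) ⟨2, by omega⟩)
          ∈ E} ≠ 0 := by
  have hn0 : (0:ℝ) < (n:ℝ) := by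
    have : 0 < n := by omega
    exact_mod_cast this
  set f : Fin 3 → ℝ := fun j => x (e3d n hn j) with hf
  set z : ℝ := f 2 with hz
  obtain ⟨hxE, hx1, hx21, hx22, hxpos⟩ : (f 0, f 1, f 2) ∈ E ∧
      f 0 ≤ 1 ∧ f 1 ≤ f 0 ∧ f 2 ≤ f 1 ∧ 0 < f 2 :=
    ⟨hx.1, hx.2.1, hx.2.2.1, hx.2.2.2.1, hx.2.2.2.2⟩
  have hzpos : 0 < z := hxpos
  have hz1 : z ≤ 1 := le_trans hx22 (le_trans hx21 hx1)
  have hcase : ∀ (i : Fin n) (hpi : pP n i),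
      (x ⟨i, hpi⟩ = f 0 ∧ (i:ℕ) = 0) ∨ (x ⟨i, hpi⟩ = f 1 ∧ (i:ℕ) = 1) ∨
      (x ⟨i, hpi⟩ = f 2 ∧ (i:ℕ) = 2) := by
    intro i hpi
    have hpi' : (i:ℕ) < 3 := hpi
    have h3 : (i:ℕ) = 0 ∨ (i:ℕ) = 1 ∨ (i:ℕ) = 2 := by omega
    rcases h3 with hv | hv | hv
    · left
      refine ⟨?_, hv⟩
      have heq : (⟨i, hpi⟩ : {i : Fin n // pP n i}) = e3d n hn 0 := by
        apply Subtype.ext; apply Fin.ext; simp [e3d, hv]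
      rw [heq]
    · right; left
      refine ⟨?_, hv⟩
      have heq : (⟨i, hpi⟩ : {i : Fin n // pP n i}) = e3d n hn 1 := by
        apply Subtype.ext; apply Fin.ext; simp [e3d, hv]
      rw [heq]
    · right; right
      refine ⟨?_, hv⟩
      have heq : (⟨i, hpi⟩ : {i : Fin n // pP n i}) = e3d n hn 2 := by
        apply Subtype.ext; apply Fin.ext; simp [e3d, hv]
      rw [heq]
  have hIccx : ∀ (i : Fin n) (hpi : pP n i), 0 ≤ x ⟨i, hpi⟩ ∧ x ⟨i, hpi⟩ ≤ 1 := by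
    intro i hpi
    rcases hcase i hpi with ⟨hh, _⟩ | ⟨hh, _⟩ | ⟨hh, _⟩ <;> rw [hh] <;>
      exact ⟨by linarith, by linarith⟩
  have hzx : ∀ (i : Fin n) (hpi : pP n i), z ≤ x ⟨i, hpi⟩ := by
    intro i hpi
    rcases hcase i hpi with ⟨hh, _⟩ | ⟨hh, _⟩ | ⟨hh, _⟩ <;> rw [hh] <;> linarith
  have hmonox : ∀ (i j : Fin n) (hpi : pP n i) (hpj : pP n j), (i:ℕ) ≤ (j:ℕ) →
      x ⟨j, hpj⟩ ≤ x ⟨i, hpi⟩ := by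
    intro i j hpi hpj hij
    rcases hcase i hpi with ⟨hi, hi'⟩ | ⟨hi, hi'⟩ | ⟨hi, hi'⟩ <;>
      rcases hcase j hpj with ⟨hj, hj'⟩ | ⟨hj, hj'⟩ | ⟨hj, hj'⟩ <;> rw [hi, hj] <;>
      first
        | linarith
        | (exfalso; omega)
  set B : Set ({i : Fin n // ¬ pP n i} → ℝ) := Set.univ.pi
    (fun j => Set.Ioo (z * ((n:ℝ) - (j.1 : ℕ)) / n) (z * ((n:ℝ) - (j.1 : ℕ) + 1) / n)) with hB
  have hjw : ∀ j : {i : Fin n // ¬ pP n i},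
      (3:ℝ) ≤ ((j.1 : ℕ) : ℝ) ∧ ((j.1 : ℕ) : ℝ) ≤ (n:ℝ) - 1 := by
    intro j
    have h3 : 3 ≤ (j.1 : ℕ) := by
      have := j.2; simp only [pP, not_lt] at this; exact this
    have hlt : (j.1 : ℕ) < n := j.1.2
    constructor
    · exact_mod_cast h3
    · have h5 : ((j.1 : ℕ) : ℝ) + 1 ≤ (n:ℝ) := by
        have : (j.1 : ℕ) + 1 ≤ n := hlt
        exact_mod_cast this
      linarith
  have hBsub : B ⊆ {b : {i : Fin n // ¬ pP n i} → ℝ |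
      (MeasurableEquiv.piEquivPiSubtypeProd (fun _ : Fin n => ℝ) (pP n)).symm (x, b)
        ∈ simplexSet n ∧
      ((MeasurableEquiv.piEquivPiSubtypeProd (fun _ : Fin n => ℝ) (pP n)).symm (x, b) ⟨0, by omega⟩,
       (MeasurableEquiv.piEquivPiSubtypeProd (fun _ : Fin n => ℝ) (pP n)).symm (x, b) ⟨1, by omega⟩,
       (MeasurableEquiv.piEquivPiSubtypeProd (fun _ : Fin n => ℝ) (pP n)).symm (x, b) ⟨2, by omega⟩)
        ∈ E} := by
    intro b hb
    have hbj : ∀ j : {i : Fin n // ¬ pP n i},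
        b j ∈ Set.Ioo (z * ((n:ℝ) - (j.1 : ℕ)) / n) (z * ((n:ℝ) - (j.1 : ℕ) + 1) / n) :=
      fun j => hb j (Set.mem_univ j)
    have hpos : ∀ j : {i : Fin n // ¬ pP n i}, 0 < b j := by
      intro j
      have h1 := (hbj j).1
      have hw := hjw j
      have hnum : (0:ℝ) < z * ((n:ℝ) - (j.1 : ℕ)) / n :=
        div_pos (mul_pos hzpos (by linarith [hw.2])) hn0
      linarith
    have hltz : ∀ j : {i : Fin n // ¬ pP n i}, b j < z := by
      intro j
      have h2 := (hbj j).2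
      have hw := hjw j
      have hub : z * ((n:ℝ) - (j.1 : ℕ) + 1) / n ≤ z := by
        rw [div_le_iff₀ hn0]
        nlinarith [hw.1, hzpos.le]
      linarith
    have ha : ∀ i : Fin n,
        (MeasurableEquiv.piEquivPiSubtypeProd (fun _ : Fin n => ℝ) (pP n)).symm (x, b) i =
          if hpi : pP n i then x ⟨i, hpi⟩ else b ⟨i, hpi⟩ :=
      fun i => rfl
    have hp0 : pP n ⟨0, by omega⟩ := by simp [pP]
    have hp1 : pP n ⟨1, by omega⟩ := by simp [pP]
    have hp2 : pP n ⟨2, by omega⟩ := by simp [pP]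
    constructor
    · constructor
      · intro i
        rw [ha i]
        by_cases hpi : pP n i
        · rw [dif_pos hpi]
          exact ⟨(hIccx i hpi).1, (hIccx i hpi).2⟩
        · rw [dif_neg hpi]
          exact ⟨(hpos ⟨i, hpi⟩).le, le_trans (hltz ⟨i, hpi⟩).le hz1⟩
      · intro i j hij
        rw [ha i, ha j]
        by_cases hpi : pP n i <;> by_cases hpj : pP n j
        · rw [dif_pos hpi, dif_pos hpj]
          exact hmonox i j hpi hpj hij
        · rw [dif_pos hpi, dif_neg hpj]
          exact le_trans (hltz ⟨j, hpj⟩).le (hzx i hpi)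
        · exact absurd (show (i:ℕ) ≤ (j:ℕ) from hij) (by simp [pP] at hpi hpj; omega)
        · rw [dif_neg hpi, dif_neg hpj]
          rcases eq_or_lt_of_le (show (i:ℕ) ≤ (j:ℕ) from hij) with hij' | hij'
          · have hieq : i = j := Fin.ext hij'
            subst hieq
            exact le_refl _
          · have h1 : b ⟨j, hpj⟩ < z * ((n:ℝ) - ((j:ℕ):ℝ) + 1) / n := (hbj ⟨j, hpj⟩).2
            have h2 : z * ((n:ℝ) - ((i:ℕ):ℝ)) / n < b ⟨i, hpi⟩ := (hbj ⟨i, hpi⟩).1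
            have hcast : ((i:ℕ) : ℝ) + 1 ≤ ((j:ℕ) : ℝ) := by exact_mod_cast hij'
            have hmid : z * ((n:ℝ) - ((j:ℕ):ℝ) + 1) / n ≤ z * ((n:ℝ) - ((i:ℕ):ℝ)) / n := by
              gcongr
              linarith
            linarith
    · show (_, _, _) ∈ E
      rw [ha ⟨0, by omega⟩, ha ⟨1, by omega⟩, ha ⟨2, by omega⟩,
        dif_pos hp0, dif_pos hp1, dif_pos hp2]
      have e0 : x ⟨⟨0, by omega⟩, hp0⟩ = f 0 := by
        rcases hcase ⟨0, by omega⟩ hp0 with ⟨hh, hv⟩ | ⟨hh, hv⟩ | ⟨hh, hv⟩ <;>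
          first
            | exact hh
            | (exfalso; norm_num at hv)
      have e1 : x ⟨⟨1, by omega⟩, hp1⟩ = f 1 := by
        rcases hcase ⟨1, by omega⟩ hp1 with ⟨hh, hv⟩ | ⟨hh, hv⟩ | ⟨hh, hv⟩ <;>
          first
            | exact hh
            | (exfalso; norm_num at hv)
      have e2 : x ⟨⟨2, by omega⟩, hp2⟩ = f 2 := by
        rcases hcase ⟨2, by omega⟩ hp2 with ⟨hh, hv⟩ | ⟨hh, hv⟩ | ⟨hh, hv⟩ <;>
          first
            | exact hh
            | (exfalso; norm_num at hv)
      rw [e0, e1, e2]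
      exact hxE
  have hBpos : (volume : Measure ({i : Fin n // ¬ pP n i} → ℝ)) B ≠ 0 := by
    rw [hB, volume_pi, Measure.pi_pi]
    rw [Finset.prod_ne_zero_iff]
    intro j _
    rw [Real.volume_Ioo]
    have hlen : z * ((n:ℝ) - (j.1 : ℕ) + 1) / n - z * ((n:ℝ) - (j.1 : ℕ)) / n = z / n := by
      field_simp
      ring
    rw [hlen]
    exact (ENNReal.ofReal_pos.mpr (div_pos hzpos hn0)).ne'
  intro h0
  exact hBpos (le_antisymm (h0 ▸ measure_mono hBsub) zero_le)

lemma key {n : ℕ} (hn : 3 ≤ n) (E : Set (ℝ × ℝ × ℝ)) (hE : MeasurableSet E)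
    (h : ∀ᵐ a ∂(volume : Measure (Fin n → ℝ)), a ∈ simplexSet n →
      (a ⟨0, by omega⟩, a ⟨1, by omega⟩, a ⟨2, by omega⟩) ∉ E) :
    volume (E ∩ Dset) = 0 := by
  set S : Set (Fin n → ℝ) := simplexSet n ∩
    (fun a => (a ⟨0, by omega⟩, a ⟨1, by omega⟩, a ⟨2, by omega⟩)) ⁻¹' E with hS
  have hSm : MeasurableSet S :=
    (simplex_measurable n).inter <|
      (((measurable_pi_apply _).prodMk
        ((measurable_pi_apply _).prodMk (measurable_pi_apply _))) hE)
  have hSnull : volume S = 0 := by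
    refine measure_mono_null ?_ (ae_iff.mp h)
    intro a ha
    simp only [Set.mem_setOf_eq, not_forall, not_not]
    exact ⟨ha.1, ha.2⟩
  let e := MeasurableEquiv.piEquivPiSubtypeProd (fun _ : Fin n => ℝ) (pP n)
  have mpe : MeasurePreserving e volume volume :=
    volume_preserving_piEquivPiSubtypeProd (fun _ : Fin n => ℝ) (pP n)
  have hTnull : volume (⇑e.symm ⁻¹' S) = 0 := by
    have hmap : Measure.map e volume = volume := mpe.map_eq
    rw [← hmap, MeasurableEquiv.map_apply]
    have hpre : ⇑e ⁻¹' (⇑e.symm ⁻¹' S) = S := by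
      rw [← Set.preimage_comp, MeasurableEquiv.symm_comp_self, Set.preimage_id]
    rw [hpre]
    exact hSnull
  have hprodnull : ((volume : Measure ({i : Fin n // pP n i} → ℝ)).prod
      (volume : Measure ({i : Fin n // ¬ pP n i} → ℝ))) (⇑e.symm ⁻¹' S) = 0 := by
    rw [← Measure.volume_eq_prod]; exact hTnull
  have hslices := Measure.measure_ae_null_of_prod_null hprodnull
  have hpt : ∀ x : {i : Fin n // pP n i} → ℝ, χd n hn x ∈ E ∩ Dset →
      (volume : Measure ({i : Fin n // ¬ pP n i} → ℝ)) (Prod.mk x ⁻¹' (⇑e.symm ⁻¹' S)) ≠ 0 := by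
    intro x hx
    exact slice_ne_zero hn E x hx
  have hZ : volume {x : {i : Fin n // pP n i} → ℝ |
      (volume : Measure ({i : Fin n // ¬ pP n i} → ℝ)) (Prod.mk x ⁻¹' (⇑e.symm ⁻¹' S)) ≠ 0} = 0 := by
    have h' : ∀ᵐ x ∂(volume : Measure ({i : Fin n // pP n i} → ℝ)),
        (volume : Measure ({i : Fin n // ¬ pP n i} → ℝ)) (Prod.mk x ⁻¹' (⇑e.symm ⁻¹' S)) = 0 := by
      filter_upwards [hslices] with x hx using hx
    exact ae_iff.mp h'
  have hpre : volume (E ∩ Dset) = volume (χd n hn ⁻¹' (E ∩ Dset)) :=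
    ((χd_mp n hn).measure_preimage ((hE.inter Dset_meas).nullMeasurableSet)).symm
  rw [hpre]
  exact measure_mono_null (fun x hx => hpt x hx) hZ

lemma mp_id3 : MeasurePreserving (fun q : ℝ × ℝ × ℝ => q) volume volume :=
  MeasurePreserving.id volume

lemma mp_s2 : MeasurePreserving (fun q : ℝ × ℝ × ℝ => (q.1, q.2.2, q.2.1)) volume volume :=
  (MeasurePreserving.id volume).prod Measure.measurePreserving_swap

lemma mp_s1 : MeasurePreserving (fun q : ℝ × ℝ × ℝ => (q.2.1, q.1, q.2.2)) volume volume :=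
  (volume_preserving_prodAssoc.comp
    (((Measure.measurePreserving_swap).prod (MeasurePreserving.id volume)))).comp
    (volume_preserving_prodAssoc.symm _)

lemma mp_mC : MeasurePreserving (fun q : ℝ × ℝ × ℝ => (q.2.2, q.1, q.2.1)) volume volume :=
  mp_s1.comp mp_s2

lemma mp_mD : MeasurePreserving (fun q : ℝ × ℝ × ℝ => (q.2.1, q.2.2, q.1)) volume volume :=
  mp_s2.comp mp_s1

lemma mp_mE : MeasurePreserving (fun q : ℝ × ℝ × ℝ => (q.2.2, q.2.1, q.1)) volume volume :=
  mp_s1.comp (mp_s2.comp mp_s1)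

lemma mp_swap2 : MeasurePreserving (Prod.swap : ℝ × ℝ → ℝ × ℝ) volume volume :=
  Measure.measurePreserving_swap

lemma plane2_null : (volume : Measure (ℝ × ℝ)) {p : ℝ × ℝ | p.2 = 0} = 0 := by
  have : {p : ℝ × ℝ | p.2 = 0} = (Set.univ : Set ℝ) ×ˢ ({0} : Set ℝ) := by
    ext p
    simp only [Set.mem_prod, Set.mem_univ, Set.mem_singleton_iff, true_and, and_true,
      Set.mem_setOf_eq]
  rw [this, Measure.volume_eq_prod, Measure.prod_prod]
  simp

lemma plane1_null : (volume : Measure (ℝ × ℝ)) {p : ℝ × ℝ | p.1 = 0} = 0 := by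
  have : {p : ℝ × ℝ | p.1 = 0} = ({0} : Set ℝ) ×ˢ (Set.univ : Set ℝ) := by
    ext p
    simp only [Set.mem_prod, Set.mem_univ, Set.mem_singleton_iff, true_and, and_true,
      Set.mem_setOf_eq]
  rw [this, Measure.volume_eq_prod, Measure.prod_prod]
  simp

lemma plane3_1_null : (volume : Measure (ℝ × ℝ × ℝ)) {q : ℝ × ℝ × ℝ | q.1 = 0} = 0 := by
  have : {q : ℝ × ℝ × ℝ | q.1 = 0} = ({0} : Set ℝ) ×ˢ (Set.univ : Set (ℝ × ℝ)) := by
    ext q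
    simp only [Set.mem_prod, Set.mem_univ, Set.mem_singleton_iff, true_and, and_true,
      Set.mem_setOf_eq]
  rw [this, Measure.volume_eq_prod, Measure.prod_prod]
  simp

lemma plane3_2_null : (volume : Measure (ℝ × ℝ × ℝ)) {q : ℝ × ℝ × ℝ | q.2.1 = 0} = 0 := by
  have : {q : ℝ × ℝ × ℝ | q.2.1 = 0} = (Set.univ : Set ℝ) ×ˢ {p : ℝ × ℝ | p.1 = 0} := by
    ext q
    simp only [Set.mem_prod, Set.mem_univ, Set.mem_singleton_iff, true_and, and_true,
      Set.mem_setOf_eq]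
  rw [this, Measure.volume_eq_prod, Measure.prod_prod, plane1_null]
  simp

lemma plane3_3_null : (volume : Measure (ℝ × ℝ × ℝ)) {q : ℝ × ℝ × ℝ | q.2.2 = 0} = 0 := by
  have : {q : ℝ × ℝ × ℝ | q.2.2 = 0} = (Set.univ : Set ℝ) ×ˢ {p : ℝ × ℝ | p.2 = 0} := by
    ext q
    simp only [Set.mem_prod, Set.mem_univ, Set.mem_singleton_iff, true_and, and_true,
      Set.mem_setOf_eq]
  rw [this, Measure.volume_eq_prod, Measure.prod_prod, plane2_null]
  simp

lemma pair_step (N : Set (ℝ × ℝ)) (hN : MeasurableSet N)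
    (h : volume ({q : ℝ × ℝ × ℝ | (q.1, q.2.1) ∈ N} ∩ Dset) = 0) :
    volume {p : ℝ × ℝ | p ∈ N ∧ 0 < p.2 ∧ p.2 ≤ p.1 ∧ p.1 ≤ 1} = 0 := by
  set W : Set (ℝ × ℝ × ℝ) := {q : ℝ × ℝ × ℝ | (q.1, q.2.1) ∈ N} ∩ Dset with hW
  have hW0 : ((volume : Measure ℝ).prod (volume : Measure (ℝ × ℝ))) W = 0 := by
    rw [← Measure.volume_eq_prod]; exact h
  have hae1 := Measure.measure_ae_null_of_prod_null hW0
  have hae2 : ∀ᵐ x ∂(volume : Measure ℝ), ∀ᵐ y ∂(volume : Measure ℝ),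
      ¬((x, y) ∈ N ∧ 0 < y ∧ y ≤ x ∧ x ≤ 1) := by
    filter_upwards [hae1] with x hx
    have hx' : ((volume : Measure ℝ).prod (volume : Measure ℝ)) (Prod.mk x ⁻¹' W) = 0 := by
      rw [← Measure.volume_eq_prod]; exact hx
    filter_upwards [Measure.measure_ae_null_of_prod_null hx'] with y hy
    have hy' : (volume : Measure ℝ) (Prod.mk y ⁻¹' (Prod.mk x ⁻¹' W)) = 0 := hy
    rintro ⟨hN', hy0, hyx, hx1⟩
    have hsub : Set.Ioc (0:ℝ) y ⊆ Prod.mk y ⁻¹' (Prod.mk x ⁻¹' W) := by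
      intro t ht
      exact ⟨hN', hx1, hyx, ht.2, ht.1⟩
    have hle : (volume : Measure ℝ) (Set.Ioc (0:ℝ) y) ≤
        volume (Prod.mk y ⁻¹' (Prod.mk x ⁻¹' W)) := measure_mono hsub
    rw [hy'] at hle
    have h0 : volume (Set.Ioc (0:ℝ) y) = 0 := le_antisymm hle zero_le
    rw [Real.volume_Ioc] at h0
    rw [ENNReal.ofReal_eq_zero] at h0
    linarith
  have hPm : MeasurableSet {p : ℝ × ℝ | p ∈ N ∧ 0 < p.2 ∧ p.2 ≤ p.1 ∧ p.1 ≤ 1} := by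
    have : {p : ℝ × ℝ | p ∈ N ∧ 0 < p.2 ∧ p.2 ≤ p.1 ∧ p.1 ≤ 1} =
        N ∩ ({p : ℝ × ℝ | 0 < p.2} ∩ ({p | p.2 ≤ p.1} ∩ {p | p.1 ≤ 1})) := rfl
    rw [this]
    exact hN.inter ((measurableSet_lt measurable_const measurable_snd).inter
      ((measurableSet_le measurable_snd measurable_fst).inter
        (measurableSet_le measurable_fst measurable_const)))
  have hgoal : ((volume : Measure ℝ).prod (volume : Measure ℝ))
      {p : ℝ × ℝ | p ∈ N ∧ 0 < p.2 ∧ p.2 ≤ p.1 ∧ p.1 ≤ 1} = 0 := by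
    rw [Measure.measure_prod_null hPm]
    filter_upwards [hae2] with x hx
    show (volume : Measure ℝ)
      (Prod.mk x ⁻¹' {p : ℝ × ℝ | p ∈ N ∧ 0 < p.2 ∧ p.2 ≤ p.1 ∧ p.1 ≤ 1}) = 0
    exact measure_mono_null (fun y hy => not_not_intro hy) (ae_iff.mp hx)
  rw [Measure.volume_eq_prod]
  exact hgoal

lemma sym_pair_null {n : ℕ} (hn : 3 ≤ n) (N : Set (ℝ × ℝ)) (hNm : MeasurableSet N)
    (hsym : ∀ p : ℝ × ℝ, p ∈ N → (p.2, p.1) ∈ N)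
    (hae : ∀ᵐ a ∂(volume : Measure (Fin n → ℝ)), a ∈ simplexSet n →
      (a ⟨0, by omega⟩, a ⟨1, by omega⟩) ∉ N) :
    volume {p : ℝ × ℝ | p.1 ∈ Set.Icc (0:ℝ) 1 ∧ p.2 ∈ Set.Icc (0:ℝ) 1 ∧ p ∈ N} = 0 := by
  set E : Set (ℝ × ℝ × ℝ) := {q : ℝ × ℝ × ℝ | (q.1, q.2.1) ∈ N} with hE
  have hEm : MeasurableSet E := (measurable_fst.prodMk (measurable_fst.comp measurable_snd)) hNm
  have hkey : volume (E ∩ Dset) = 0 := by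
    refine key hn E hEm ?_
    filter_upwards [hae] with a ha hsim
    exact ha hsim
  have hA := pair_step N hNm hkey
  set A : Set (ℝ × ℝ) := {p : ℝ × ℝ | p ∈ N ∧ 0 < p.2 ∧ p.2 ≤ p.1 ∧ p.1 ≤ 1} with hAdef
  have hAm : MeasurableSet A := by
    have : A = N ∩ ({p : ℝ × ℝ | 0 < p.2} ∩ ({p | p.2 ≤ p.1} ∩ {p | p.1 ≤ 1})) := rfl
    rw [this]
    exact hNm.inter ((measurableSet_lt measurable_const measurable_snd).inter
      ((measurableSet_le measurable_snd measurable_fst).inter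
        (measurableSet_le measurable_fst measurable_const)))
  have hswapA : volume (Prod.swap ⁻¹' A) = 0 := by
    rw [mp_swap2.measure_preimage hAm.nullMeasurableSet]; exact hA
  have hcover : {p : ℝ × ℝ | p.1 ∈ Set.Icc (0:ℝ) 1 ∧ p.2 ∈ Set.Icc (0:ℝ) 1 ∧ p ∈ N} ⊆
      A ∪ (Prod.swap ⁻¹' A) ∪ ({p : ℝ × ℝ | p.1 = 0} ∪ {p : ℝ × ℝ | p.2 = 0}) := by
    rintro p ⟨hp1, hp2, hpN⟩
    rcases le_total p.2 p.1 with hcmp | hcmp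
    · rcases hp2.1.eq_or_lt with h0 | h0
      · exact Or.inr (Or.inr (Set.mem_setOf_eq ▸ h0.symm))
      · exact Or.inl (Or.inl ⟨hpN, h0, hcmp, hp1.2⟩)
    · rcases hp1.1.eq_or_lt with h0 | h0
      · exact Or.inr (Or.inl (Set.mem_setOf_eq ▸ h0.symm))
      · exact Or.inl (Or.inr ⟨hsym p hpN, h0, hcmp, hp2.2⟩)
  refine measure_mono_null hcover ?_
  refine measure_union_null (measure_union_null hA hswapA) ?_
  exact measure_union_null plane1_null plane2_null

/-- Let `n ≥ 3` and let `𝔲 : Δ_n → S_n` be a binary map: there is a measurable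
`F ⊆ I²` such that for a.e. `a ∈ Δ_n` and all `i ≠ j`, `𝔲(a)_i < 𝔲(a)_j` iff
`(a_i, a_j) ∈ F`.  Then `u ≺ v :⟺ (u,v) ∈ F` is an almost total ordering of
`I = [0,1]`: completeness, antisymmetry and transitivity hold up to null sets. -/
theorem binary_map_gives_almost_total_order {n : ℕ} (hn : 3 ≤ n)
    (𝔲 : (Fin n → ℝ) → Equiv.Perm (Fin n)) (F : Set (ℝ × ℝ))
    (hF : MeasurableSet F)
    (hbin : ∀ᵐ a ∂(volume : Measure (Fin n → ℝ)), a ∈ simplexSet n →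
      ∀ i j : Fin n, i ≠ j → ((𝔲 a) i < (𝔲 a) j ↔ (a i, a j) ∈ F)) :
    volume {p : ℝ × ℝ | p.1 ∈ Set.Icc (0:ℝ) 1 ∧ p.2 ∈ Set.Icc (0:ℝ) 1 ∧
        p ∉ F ∧ (p.2, p.1) ∉ F} = 0 ∧
    volume {p : ℝ × ℝ | p.1 ∈ Set.Icc (0:ℝ) 1 ∧ p.2 ∈ Set.Icc (0:ℝ) 1 ∧
        p ∈ F ∧ (p.2, p.1) ∈ F} = 0 ∧
    volume {q : ℝ × ℝ × ℝ | q.1 ∈ Set.Icc (0:ℝ) 1 ∧ q.2.1 ∈ Set.Icc (0:ℝ) 1 ∧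
        q.2.2 ∈ Set.Icc (0:ℝ) 1 ∧
        (q.1, q.2.1) ∈ F ∧ (q.2.1, q.2.2) ∈ F ∧ (q.1, q.2.2) ∉ F} = 0 := by
  have hne : ∀ (i j : ℕ) (hi : i < n) (hj : j < n), i ≠ j →
      (⟨i, hi⟩ : Fin n) ≠ ⟨j, hj⟩ := fun i j hi hj hij => Fin.ne_of_val_ne hij
  -- goal 1
  have goal1 : volume {p : ℝ × ℝ | p.1 ∈ Set.Icc (0:ℝ) 1 ∧ p.2 ∈ Set.Icc (0:ℝ) 1 ∧
      p ∉ F ∧ (p.2, p.1) ∉ F} = 0 := by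
    set N : Set (ℝ × ℝ) := {p : ℝ × ℝ | p ∉ F ∧ (p.2, p.1) ∉ F} with hNdef
    have hNm : MeasurableSet N := by
      have : N = Fᶜ ∩ (fun p : ℝ × ℝ => (p.2, p.1)) ⁻¹' Fᶜ := rfl
      rw [this]
      exact hF.compl.inter ((measurable_snd.prodMk measurable_fst) hF.compl)
    have hsym : ∀ p : ℝ × ℝ, p ∈ N → (p.2, p.1) ∈ N := fun p hp => ⟨hp.2, hp.1⟩
    have hae : ∀ᵐ a ∂(volume : Measure (Fin n → ℝ)), a ∈ simplexSet n →
        (a ⟨0, by omega⟩, a ⟨1, by omega⟩) ∉ N := by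
      filter_upwards [hbin] with a ha hsim
      rintro ⟨h1, h2⟩
      rcases lt_or_gt_of_ne ((𝔲 a).injective.ne (hne 0 1 (by omega) (by omega) (by omega))) with
        hlt | hlt
      · exact h1 ((ha hsim _ _ (hne 0 1 (by omega) (by omega) (by omega))).mp hlt)
      · exact h2 ((ha hsim _ _ (hne 1 0 (by omega) (by omega) (by omega))).mp hlt)
    have := sym_pair_null hn N hNm hsym hae
    exact this
  -- goal 2
  have goal2 : volume {p : ℝ × ℝ | p.1 ∈ Set.Icc (0:ℝ) 1 ∧ p.2 ∈ Set.Icc (0:ℝ) 1 ∧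
      p ∈ F ∧ (p.2, p.1) ∈ F} = 0 := by
    set N : Set (ℝ × ℝ) := {p : ℝ × ℝ | p ∈ F ∧ (p.2, p.1) ∈ F} with hNdef
    have hNm : MeasurableSet N := by
      have : N = F ∩ (fun p : ℝ × ℝ => (p.2, p.1)) ⁻¹' F := rfl
      rw [this]
      exact hF.inter ((measurable_snd.prodMk measurable_fst) hF)
    have hsym : ∀ p : ℝ × ℝ, p ∈ N → (p.2, p.1) ∈ N := fun p hp => ⟨hp.2, hp.1⟩
    have hae : ∀ᵐ a ∂(volume : Measure (Fin n → ℝ)), a ∈ simplexSet n →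
        (a ⟨0, by omega⟩, a ⟨1, by omega⟩) ∉ N := by
      filter_upwards [hbin] with a ha hsim
      rintro ⟨h1, h2⟩
      have hu1 := (ha hsim _ _ (hne 0 1 (by omega) (by omega) (by omega))).mpr h1
      have hu2 := (ha hsim _ _ (hne 1 0 (by omega) (by omega) (by omega))).mpr h2
      exact absurd (lt_trans hu1 hu2) (lt_irrefl _)
    exact sym_pair_null hn N hNm hsym hae
  -- goal 3
  have goal3 : volume {q : ℝ × ℝ × ℝ | q.1 ∈ Set.Icc (0:ℝ) 1 ∧ q.2.1 ∈ Set.Icc (0:ℝ) 1 ∧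
      q.2.2 ∈ Set.Icc (0:ℝ) 1 ∧
      (q.1, q.2.1) ∈ F ∧ (q.2.1, q.2.2) ∈ F ∧ (q.1, q.2.2) ∉ F} = 0 := by
    set C : Set (ℝ × ℝ × ℝ) :=
      {q : ℝ × ℝ × ℝ | (q.1, q.2.1) ∈ F ∧ (q.2.1, q.2.2) ∈ F ∧ (q.1, q.2.2) ∉ F} with hCdef
    have hCm : MeasurableSet C := by
      have : C = (fun q : ℝ × ℝ × ℝ => (q.1, q.2.1)) ⁻¹' F ∩
          ((fun q : ℝ × ℝ × ℝ => (q.2.1, q.2.2)) ⁻¹' F ∩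
           (fun q : ℝ × ℝ × ℝ => (q.1, q.2.2)) ⁻¹' Fᶜ) := rfl
      rw [this]
      exact ((measurable_fst.prodMk (measurable_fst.comp measurable_snd)) hF).inter
        ((((measurable_fst.comp measurable_snd).prodMk
            (measurable_snd.comp measurable_snd)) hF).inter
          ((measurable_fst.prodMk (measurable_snd.comp measurable_snd)) hF.compl))
    -- transitivity a.e. for arbitrary distinct indices
    have htrans : ∀ (i j k : Fin n), i ≠ j → j ≠ k → i ≠ k →
        ∀ᵐ a ∂(volume : Measure (Fin n → ℝ)), a ∈ simplexSet n →
          ¬((a i, a j) ∈ F ∧ (a j, a k) ∈ F ∧ (a i, a k) ∉ F) := by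
      intro i j k hij hjk hik
      filter_upwards [hbin] with a ha hsim
      rintro ⟨h1, h2, h3⟩
      exact h3 ((ha hsim i k hik).mp
        (lt_trans ((ha hsim i j hij).mpr h1) ((ha hsim j k hjk).mpr h2)))
    have h01 := hne 0 1 (by omega) (by omega) (by omega)
    have h02 := hne 0 2 (by omega) (by omega) (by omega)
    have h12 := hne 1 2 (by omega) (by omega) (by omega)
    have h10 := hne 1 0 (by omega) (by omega) (by omega)
    have h20 := hne 2 0 (by omega) (by omega) (by omega)
    have h21 := hne 2 1 (by omega) (by omega) (by omega)
    -- the six permuted bad sets are null on the descending region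
    have k1 : volume ((fun q : ℝ × ℝ × ℝ => q) ⁻¹' C ∩ Dset) = 0 := by
      refine key hn _ (hCm.preimage mp_id3.measurable) ?_
      filter_upwards [htrans _ _ _ h01 h12 h02] with a ha hsim
      exact fun hmem => ha hsim hmem
    have k2 : volume ((fun q : ℝ × ℝ × ℝ => (q.2.1, q.1, q.2.2)) ⁻¹' C ∩ Dset) = 0 := by
      refine key hn _ (hCm.preimage mp_s1.measurable) ?_
      filter_upwards [htrans _ _ _ h10 h02 h12] with a ha hsim
      exact fun hmem => ha hsim hmem
    have k3 : volume ((fun q : ℝ × ℝ × ℝ => (q.1, q.2.2, q.2.1)) ⁻¹' C ∩ Dset) = 0 := by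
      refine key hn _ (hCm.preimage mp_s2.measurable) ?_
      filter_upwards [htrans _ _ _ h02 h21 h01] with a ha hsim
      exact fun hmem => ha hsim hmem
    have k4 : volume ((fun q : ℝ × ℝ × ℝ => (q.2.2, q.1, q.2.1)) ⁻¹' C ∩ Dset) = 0 := by
      refine key hn _ (hCm.preimage mp_mC.measurable) ?_
      filter_upwards [htrans _ _ _ h20 h01 h21] with a ha hsim
      exact fun hmem => ha hsim hmem
    have k5 : volume ((fun q : ℝ × ℝ × ℝ => (q.2.1, q.2.2, q.1)) ⁻¹' C ∩ Dset) = 0 := by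
      refine key hn _ (hCm.preimage mp_mD.measurable) ?_
      filter_upwards [htrans _ _ _ h12 h20 h10] with a ha hsim
      exact fun hmem => ha hsim hmem
    have k6 : volume ((fun q : ℝ × ℝ × ℝ => (q.2.2, q.2.1, q.1)) ⁻¹' C ∩ Dset) = 0 := by
      refine key hn _ (hCm.preimage mp_mE.measurable) ?_
      filter_upwards [htrans _ _ _ h21 h10 h20] with a ha hsim
      exact fun hmem => ha hsim hmem
    -- pull back along the (inverse) permutations
    have hDsetm := Dset_meas
    have u1 : volume ((fun q : ℝ × ℝ × ℝ => q) ⁻¹'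
        (((fun q : ℝ × ℝ × ℝ => q) ⁻¹' C) ∩ Dset)) = 0 := by
      rw [mp_id3.measure_preimage
        (((hCm.preimage mp_id3.measurable).inter hDsetm).nullMeasurableSet)]
      exact k1
    have u2 : volume ((fun q : ℝ × ℝ × ℝ => (q.2.1, q.1, q.2.2)) ⁻¹'
        (((fun q : ℝ × ℝ × ℝ => (q.2.1, q.1, q.2.2)) ⁻¹' C) ∩ Dset)) = 0 := by
      rw [mp_s1.measure_preimage
        (((hCm.preimage mp_s1.measurable).inter hDsetm).nullMeasurableSet)]
      exact k2
    have u3 : volume ((fun q : ℝ × ℝ × ℝ => (q.1, q.2.2, q.2.1)) ⁻¹'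
        (((fun q : ℝ × ℝ × ℝ => (q.1, q.2.2, q.2.1)) ⁻¹' C) ∩ Dset)) = 0 := by
      rw [mp_s2.measure_preimage
        (((hCm.preimage mp_s2.measurable).inter hDsetm).nullMeasurableSet)]
      exact k3
    have u4 : volume ((fun q : ℝ × ℝ × ℝ => (q.2.1, q.2.2, q.1)) ⁻¹'
        (((fun q : ℝ × ℝ × ℝ => (q.2.2, q.1, q.2.1)) ⁻¹' C) ∩ Dset)) = 0 := by
      rw [mp_mD.measure_preimage
        (((hCm.preimage mp_mC.measurable).inter hDsetm).nullMeasurableSet)]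
      exact k4
    have u5 : volume ((fun q : ℝ × ℝ × ℝ => (q.2.2, q.1, q.2.1)) ⁻¹'
        (((fun q : ℝ × ℝ × ℝ => (q.2.1, q.2.2, q.1)) ⁻¹' C) ∩ Dset)) = 0 := by
      rw [mp_mC.measure_preimage
        (((hCm.preimage mp_mD.measurable).inter hDsetm).nullMeasurableSet)]
      exact k5
    have u6 : volume ((fun q : ℝ × ℝ × ℝ => (q.2.2, q.2.1, q.1)) ⁻¹'
        (((fun q : ℝ × ℝ × ℝ => (q.2.2, q.2.1, q.1)) ⁻¹' C) ∩ Dset)) = 0 := by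
      rw [mp_mE.measure_preimage
        (((hCm.preimage mp_mE.measurable).inter hDsetm).nullMeasurableSet)]
      exact k6
    -- covering
    have hcover : {q : ℝ × ℝ × ℝ | q.1 ∈ Set.Icc (0:ℝ) 1 ∧ q.2.1 ∈ Set.Icc (0:ℝ) 1 ∧
        q.2.2 ∈ Set.Icc (0:ℝ) 1 ∧
        (q.1, q.2.1) ∈ F ∧ (q.2.1, q.2.2) ∈ F ∧ (q.1, q.2.2) ∉ F} ⊆
        ((fun q : ℝ × ℝ × ℝ => q) ⁻¹' (((fun q : ℝ × ℝ × ℝ => q) ⁻¹' C) ∩ Dset)) ∪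
        ((fun q : ℝ × ℝ × ℝ => (q.2.1, q.1, q.2.2)) ⁻¹'
          (((fun q : ℝ × ℝ × ℝ => (q.2.1, q.1, q.2.2)) ⁻¹' C) ∩ Dset)) ∪
        ((fun q : ℝ × ℝ × ℝ => (q.1, q.2.2, q.2.1)) ⁻¹'
          (((fun q : ℝ × ℝ × ℝ => (q.1, q.2.2, q.2.1)) ⁻¹' C) ∩ Dset)) ∪
        ((fun q : ℝ × ℝ × ℝ => (q.2.1, q.2.2, q.1)) ⁻¹'
          (((fun q : ℝ × ℝ × ℝ => (q.2.2, q.1, q.2.1)) ⁻¹' C) ∩ Dset)) ∪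
        ((fun q : ℝ × ℝ × ℝ => (q.2.2, q.1, q.2.1)) ⁻¹'
          (((fun q : ℝ × ℝ × ℝ => (q.2.1, q.2.2, q.1)) ⁻¹' C) ∩ Dset)) ∪
        ((fun q : ℝ × ℝ × ℝ => (q.2.2, q.2.1, q.1)) ⁻¹'
          (((fun q : ℝ × ℝ × ℝ => (q.2.2, q.2.1, q.1)) ⁻¹' C) ∩ Dset)) ∪
        ({q : ℝ × ℝ × ℝ | q.1 = 0} ∪ {q : ℝ × ℝ × ℝ | q.2.1 = 0} ∪
          {q : ℝ × ℝ × ℝ | q.2.2 = 0}) := by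
      rintro q ⟨hq1, hq2, hq3, hF1, hF2, hF3⟩
      have hqC : q ∈ C := ⟨hF1, hF2, hF3⟩
      rcases hq1.1.eq_or_lt with hz1 | hz1
      · exact Or.inr (Or.inl (Or.inl hz1.symm))
      rcases hq2.1.eq_or_lt with hz2 | hz2
      · exact Or.inr (Or.inl (Or.inr hz2.symm))
      rcases hq3.1.eq_or_lt with hz3 | hz3
      · exact Or.inr (Or.inr hz3.symm)
      rcases le_total q.2.1 q.1 with hxy | hxy <;> rcases le_total q.2.2 q.2.1 with hyz | hyz <;>
        rcases le_total q.2.2 q.1 with hxz | hxz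
      · exact Or.inl (Or.inl (Or.inl (Or.inl (Or.inl (Or.inl
          ⟨hqC, hq1.2, hxy, hyz, hz3⟩)))))
      · exact Or.inl (Or.inl (Or.inl (Or.inl (Or.inl (Or.inl
          ⟨hqC, hq1.2, hxy, hyz, hz3⟩)))))
      · -- x ≥ y, z ≥ y, z ≤ x : order x ≥ z ≥ y
        exact Or.inl (Or.inl (Or.inl (Or.inl (Or.inr ⟨hqC, hq1.2, hxz, hyz, hz2⟩))))
      · -- x ≥ y, z ≥ y, z ≥ x : z ≥ x ≥ y
        exact Or.inl (Or.inl (Or.inr ⟨hqC, hq3.2, hxz, hxy, hz2⟩))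
      · -- y ≥ x, y ≥ z, x ≥ z : y ≥ x ≥ z
        exact Or.inl (Or.inl (Or.inl (Or.inl (Or.inl (Or.inr
          ⟨hqC, hq2.2, hxy, hxz, hz3⟩)))))
      · -- y ≥ x, y ≥ z, z ≥ x : y ≥ z ≥ x
        exact Or.inl (Or.inl (Or.inl (Or.inr ⟨hqC, hq2.2, hyz, hxz, hz1⟩)))
      · -- y ≥ x, z ≥ y, x ≥ z: all equal-ish; y ≥ x and z ≥ y gives z ≥ x, with x ≥ z: z = x
        -- use z ≥ y ≥ x ordering: mE case
        exact Or.inl (Or.inr ⟨hqC, hq3.2, hyz, hxy, hz1⟩)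
      · -- y ≥ x, z ≥ y, z ≥ x : z ≥ y ≥ x
        exact Or.inl (Or.inr ⟨hqC, hq3.2, hyz, hxy, hz1⟩)
    refine measure_mono_null hcover ?_
    refine measure_union_null (measure_union_null (measure_union_null (measure_union_null
      (measure_union_null (measure_union_null u1 u2) u3) u4) u5) u6) ?_
    exact measure_union_null (measure_union_null plane3_1_null plane3_2_null) plane3_3_null
  exact ⟨goal1, goal2, goal3⟩
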